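/- Let Y be a Banach space with dual Y′, let K ⊆ Y be a nonempty convex set, and let x* ∈ K. Let G : Y → 2^{Y′} be a nonempty-valued correspondence which, for each y ∈ K, is lower semicontinuous from the relative topology of the segment L = {λy + (1−λ)x* : λ ∈ [0,1]} into the weak*-topology σ(Y′,Y). Let f : Y → ℝ ∪ {−∞,+∞} be concave with f(x*) = 0. If sup_{u ∈ G(z)} [Re⟨u, x* − z⟩ + f(z)] ≤ 0 for every z ∈ K, then sup_{u ∈ G(x*)} [Re⟨u, x* − y⟩ + f(y)] ≤ 0 for every y ∈ K. -/

import Mathlib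

/-- Lower semicontinuity of a correspondence on a subset `L` of `Z`
(with respect to the relative topology of `L`). -/
def LowerSemicontinuousCorrOn {Z Y : Type*} [TopologicalSpace Z] [TopologicalSpace Y]
    (P : Z → Set Y) (L : Set Z) : Prop :=
  ∀ z ∈ L, ∀ V : Set Y, IsOpen V → (P z ∩ V).Nonempty →
    ∃ U : Set Z, IsOpen U ∧ z ∈ U ∧ ∀ u ∈ U ∩ L, (P u ∩ V).Nonempty

/-- The Minty-type argument used in the proof of Theorem 6 of the paper. -/
theorem minty_argument
    {Y : Type*} [NormedAddCommGroup Y] [NormedSpace ℝ Y] [CompleteSpace Y]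
    (K : Set Y) (hK_ne : K.Nonempty) (hK_cv : Convex ℝ K)
    (xs : Y) (hxs : xs ∈ K)
    (G : Y → Set (WeakDual ℝ Y)) (hG_ne : ∀ y : Y, (G y).Nonempty)
    (hG_lsc : ∀ y ∈ K, LowerSemicontinuousCorrOn G (segment ℝ y xs))
    (f : Y → EReal)
    (hf_cc : ∀ y₁ y₂ : Y, ∀ l : ℝ, 0 ≤ l → l ≤ 1 →
      (l : EReal) * f y₁ + ((1 - l : ℝ) : EReal) * f y₂ ≤ f (l • y₁ + (1 - l) • y₂))
    (hf_zero : f xs = 0)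
    (hsup : ∀ z ∈ K, (⨆ u ∈ G z, ((u (xs - z) : ℝ) : EReal) + f z) ≤ 0) :
    ∀ y ∈ K, (⨆ u ∈ G xs, ((u (xs - y) : ℝ) : EReal) + f y) ≤ 0 := by
  intro y hy
  refine iSup₂_le fun u₀ hu₀ => ?_
  have htop : f y ≠ ⊤ := by
    intro hfy
    obtain ⟨u, hu⟩ := hG_ne y
    have h1 : (↑(u (xs - y)) : EReal) + f y ≤ 0 :=
      le_trans (le_iSup₂_of_le u hu le_rfl) (hsup y hy)
    rw [hfy, EReal.coe_add_top] at h1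
    exact absurd h1 (by simp)
  rcases eq_or_ne (f y) ⊥ with hbot | hbot
  · rw [hbot, EReal.add_bot]; exact bot_le
  obtain ⟨c, hfy⟩ : ∃ c : ℝ, f y = (c : EReal) :=
    ⟨(f y).toReal, (EReal.coe_toReal htop hbot).symm⟩
  have key : ∀ l : ℝ, 0 < l → l ≤ 1 → ∀ u ∈ G (l • y + (1 - l) • xs),
      (u (xs - y) : ℝ) ≤ -c := by
    intro l hl0 hl1 u hu
    set z := l • y + (1 - l) • xs with hz
    have hzK : z ∈ K := hK_cv hy hxs hl0.le (by linarith) (by ring)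
    have h1 : (↑(u (xs - z)) : EReal) + f z ≤ 0 :=
      le_trans (le_iSup₂_of_le u hu le_rfl) (hsup z hzK)
    have h2 : ((l * c : ℝ) : EReal) ≤ f z := by
      have h := hf_cc y xs l hl0.le hl1
      rw [hf_zero, mul_zero, add_zero, hfy] at h
      calc ((l * c : ℝ) : EReal) = (l : EReal) * (c : EReal) := by rw [EReal.coe_mul]
        _ ≤ f z := h
    have h3 : (↑(u (xs - z)) : EReal) + ((l * c : ℝ) : EReal) ≤ 0 :=
      le_trans (add_le_add_right h2 _) h1
    rw [← EReal.coe_add] at h3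
    have h4 : u (xs - z) + l * c ≤ 0 := by exact_mod_cast h3
    have h5 : xs - z = l • (xs - y) := by rw [hz]; module
    rw [h5, map_smul, smul_eq_mul] at h4
    nlinarith
  suffices h : u₀ (xs - y) ≤ -c by
    rw [hfy, ← EReal.coe_add]
    have : u₀ (xs - y) + c ≤ 0 := by linarith
    exact_mod_cast this
  by_contra hcon
  push_neg at hcon
  have hVopen : IsOpen {u : WeakDual ℝ Y | -c < u (xs - y)} :=
    isOpen_lt continuous_const (WeakDual.eval_continuous (xs - y))
  obtain ⟨U, hUopen, hxsU, hU⟩ :=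
    hG_lsc y hy xs (right_mem_segment ℝ y xs) _ hVopen ⟨u₀, hu₀, hcon⟩
  have hcont : Continuous fun l : ℝ => l • y + (1 - l) • xs := by continuity
  have h0 : (fun l : ℝ => l • y + (1 - l) • xs) 0 ∈ U := by simpa using hxsU
  have hnhds : (fun l : ℝ => l • y + (1 - l) • xs) ⁻¹' U ∈ nhds (0 : ℝ) :=
    hcont.continuousAt.preimage_mem_nhds (hUopen.mem_nhds h0)
  obtain ⟨δ, hδ, hball⟩ := Metric.mem_nhds_iff.mp hnhds
  set l := min (δ / 2) 1 with hl
  have hl0 : 0 < l := lt_min (by linarith) one_pos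
  have hl1 : l ≤ 1 := min_le_right _ _
  have hmem : l • y + (1 - l) • xs ∈ U := hball (Metric.mem_ball.mpr (by
    rw [Real.dist_eq, sub_zero, abs_of_pos hl0]
    exact lt_of_le_of_lt (min_le_left _ _) (by linarith)))
  have hseg : l • y + (1 - l) • xs ∈ segment ℝ y xs :=
    ⟨l, 1 - l, hl0.le, by linarith, by ring, rfl⟩
  obtain ⟨u, hu, huV⟩ := hU _ ⟨hmem, hseg⟩
  exact absurd (key l hl0 hl1 u hu) (not_le.mpr huV)
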